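/- arXiv:2002.01024 — 5 statements merged into one kernel-verified Lean document; each statement's English description precedes it below -/
import Mathlib

section
/- Let t be a nonzero rational number and let a, b, c be positive rational numbers with a² + b² = c² and ab/2 = t. Then c − a ≠ 0, and setting X = t·b/(c − a) and Y = 2t²/(c − a), the point (X, Y) satisfies Y² = X³ − t²·X and Y ≠ 0. -/
/-- A rational right triangle `(a, b, c)` with area `t` gives rise to a rational point
`(X, Y) = (t·b/(c − a), 2t²/(c − a))` on the congruent number curve `Y² = X³ − t²X`
with `Y ≠ 0`. -/
theorem triangle_to_point (t a b c : ℚ) (ht : t ≠ 0) (ha : 0 < a) (hb : 0 < b) (hc : 0 < c)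
    (hpyth : a ^ 2 + b ^ 2 = c ^ 2) (harea : a * b / 2 = t) :
    c - a ≠ 0 ∧
      (2 * t ^ 2 / (c - a)) ^ 2 =
          (t * b / (c - a)) ^ 3 - t ^ 2 * (t * b / (c - a)) ∧
      2 * t ^ 2 / (c - a) ≠ 0 := by
  have hca : 0 < c - a := by
    have h1 : a ^ 2 < c ^ 2 := by nlinarith [sq_nonneg b]
    have h2 : a < c := by nlinarith
    linarith
  have hne : c - a ≠ 0 := ne_of_gt hca
  refine ⟨hne, ?_, ?_⟩
  · subst harea
    field_simp
    linear_combination (-1) * hpyth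
  · positivity
end

section
/- Let t be a squarefree positive integer. Then t is a congruent number if and only if there exist rational numbers X, Y with Y ≠ 0 and Y² = X³ − t²·X. -/
/-- A positive rational number `t` is a congruent number if it is the area of a right
triangle with rational side lengths. -/
def IsCongruent (t : ℚ) : Prop :=
  ∃ a b c : ℚ, 0 < a ∧ 0 < b ∧ 0 < c ∧ a ^ 2 + b ^ 2 = c ^ 2 ∧ a * b / 2 = t

/-- A squarefree positive integer `t` is a congruent number if and only if the curve
`Y² = X³ − t²X` has a rational point with `Y ≠ 0`. -/
theorem isCongruent_iff_point (t : ℕ) (hsf : Squarefree t) (ht : 0 < t) :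
    IsCongruent t ↔ ∃ X Y : ℚ, Y ≠ 0 ∧ Y ^ 2 = X ^ 3 - (t : ℚ) ^ 2 * X := by
  have htq : (0 : ℚ) < (t : ℚ) := by exact_mod_cast ht
  constructor
  · rintro ⟨a, b, c, ha, hb, hc, hpyth, harea⟩
    have hb' : b ≠ 0 := ne_of_gt hb
    have hab : a * b = 2 * t := by linarith
    refine ⟨(t : ℚ) * (a + c) / b, 2 * (t : ℚ) ^ 2 * (a + c) / b ^ 2, ?_, ?_⟩
    · have : 0 < 2 * (t : ℚ) ^ 2 * (a + c) / b ^ 2 := by positivity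
      exact ne_of_gt this
    · rw [show ((t:ℚ)) = a*b/2 from harea.symm]
      field_simp
      ring_nf
      linear_combination hpyth
  · rintro ⟨X, Y, hY, heq⟩
    have hx : X * (X ^ 2 - (t : ℚ) ^ 2) = Y ^ 2 := by linarith [heq]
    have hY2 : (0 : ℚ) < Y ^ 2 := by positivity
    have hX0 : X ≠ 0 := by
      rintro rfl; simp at hx; exact hY (pow_eq_zero_iff (by norm_num) |>.mp hx.symm)
    have hXt : X ^ 2 - (t : ℚ) ^ 2 ≠ 0 := by
      intro h
      rw [h, mul_zero] at hx
      exact hY (pow_eq_zero_iff (by norm_num) |>.mp hx.symm)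
    set a0 : ℚ := (X ^ 2 - (t : ℚ) ^ 2) / Y with ha0
    set b0 : ℚ := 2 * (t : ℚ) * X / Y with hb0
    set c0 : ℚ := (X ^ 2 + (t : ℚ) ^ 2) / Y with hc0
    have ha0' : a0 ≠ 0 := div_ne_zero hXt hY
    have hb0' : b0 ≠ 0 := div_ne_zero (mul_ne_zero (by positivity) hX0) hY
    have hab : a0 * b0 = 2 * t := by
      rw [ha0, hb0]
      field_simp
      linear_combination hx
    have hpyth : a0 ^ 2 + b0 ^ 2 = c0 ^ 2 := by
      rw [ha0, hb0, hc0]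
      field_simp
      ring
    have hc0' : c0 ≠ 0 := by
      intro h
      rw [h] at hpyth
      nlinarith [sq_nonneg a0, sq_nonneg b0, pow_ne_zero 2 ha0', sq_nonneg c0]
    refine ⟨|a0|, |b0|, |c0|, abs_pos.mpr ha0', abs_pos.mpr hb0', abs_pos.mpr hc0', ?_, ?_⟩
    · rw [sq_abs, sq_abs, sq_abs]; exact hpyth
    · rw [← abs_mul, hab, abs_of_pos (by positivity)]
      ring
end

section
/- Let t be a squarefree positive integer. Then t is a congruent number if and only if the group of rational points E_t(ℚ) of the elliptic curve E_t : Y² = X³ − t²X is infinite. -/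
/-- The congruent number elliptic curve `Eₜ : Y² = X³ − t²X` in affine Weierstrass form. -/
def Et (t : ℚ) : WeierstrassCurve.Affine ℚ :=
  { a₁ := 0, a₂ := 0, a₃ := 0, a₄ := -t ^ 2, a₆ := 0 }

lemma no_rat_sq_two (q : ℚ) : q ^ 2 ≠ 2 := by
  intro h
  have h2 : ((q : ℝ)) ^ 2 = 2 := by exact_mod_cast congrArg (Rat.cast : ℚ → ℝ) h
  have : Real.sqrt 2 = |(q : ℝ)| := by
    rw [← h2, Real.sqrt_sq_eq_abs]
  exact irrational_sqrt_two (this ▸ ⟨|q|, by push_cast [abs_eq_abs]; left; rfl⟩)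

lemma rat_num_mul_den (q : ℚ) : (q.num : ℚ) = q * q.den := by
  have hd : (q.den : ℚ) ≠ 0 := by exact_mod_cast q.den_nz
  have h := Rat.num_div_den q
  rw [div_eq_iff hd] at h
  exact h

lemma rat_sub_int_num_den (q : ℚ) (n : ℤ) :
    (q - n).num = q.num - n * q.den ∧ (q - n).den = q.den := by
  have hden : (0:ℤ) < (q.den : ℤ) := by exact_mod_cast q.pos
  have hcop : IsCoprime (q.num - n * q.den) (q.den : ℤ) := by
    have h0 : IsCoprime q.num (q.den : ℤ) := by
      rw [Int.isCoprime_iff_gcd_eq_one]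
      exact q.reduced
    simpa [sub_eq_add_neg, mul_comm] using h0.add_mul_left_left (-n)
  have hcop' : Nat.Coprime (q.num - n * q.den).natAbs ((q.den : ℤ)).natAbs := by
    rw [Int.isCoprime_iff_gcd_eq_one] at hcop
    exact hcop
  have hq : q - n = ((q.num - n * q.den : ℤ) : ℚ) / ((q.den : ℤ) : ℚ) := by
    have hdq : ((q.den : ℤ) : ℚ) ≠ 0 := by exact_mod_cast q.den_nz
    rw [eq_div_iff hdq]
    push_cast
    rw [sub_mul, ← rat_num_mul_den q]
  constructor
  · rw [hq, Rat.num_div_eq_of_coprime hden hcop']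
  · have := Rat.den_div_eq_of_coprime hden hcop'
    rw [← hq] at this
    exact_mod_cast this

def fdbl (t : ℕ) (x : ℚ) : ℚ := (x ^ 2 + t ^ 2) ^ 2 / (4 * (x ^ 3 - t ^ 2 * x))

def InS (t : ℕ) (x : ℚ) : Prop :=
  ∃ u v w : ℚ, u ≠ 0 ∧ v ≠ 0 ∧ w ≠ 0 ∧ x = u ^ 2 ∧ x - t = v ^ 2 ∧ x + t = w ^ 2

lemma dvd4_helper (d : ℕ) (hd : d ∣ 4) (h4 : ¬ (4 ∣ d)) : d ∣ 2 := by
  have hle := Nat.le_of_dvd (by norm_num) hd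
  interval_cases d <;> omega

lemma nat_gcd_sq (m n : ℕ) : Nat.gcd (m ^ 2) (n ^ 2) = Nat.gcd m n ^ 2 := by
  rcases Nat.eq_zero_or_pos (Nat.gcd m n) with h | h
  · have hm := Nat.eq_zero_of_gcd_eq_zero_left h
    have hn := Nat.eq_zero_of_gcd_eq_zero_right h
    subst hm hn; simp
  · obtain ⟨m', hm'⟩ := Nat.gcd_dvd_left m n
    obtain ⟨n', hn'⟩ := Nat.gcd_dvd_right m n
    have hm2 : m / Nat.gcd m n = m' := Nat.div_eq_of_eq_mul_left h (by rw [mul_comm]; exact hm')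
    have hn2 : n / Nat.gcd m n = n' := Nat.div_eq_of_eq_mul_left h (by rw [mul_comm]; exact hn')
    have hcop : Nat.Coprime m' n' := by
      rw [← hm2, ← hn2]; exact Nat.coprime_div_gcd_div_gcd h
    calc Nat.gcd (m ^ 2) (n ^ 2)
        = Nat.gcd (Nat.gcd m n ^ 2 * m' ^ 2) (Nat.gcd m n ^ 2 * n' ^ 2) := by
          rw [← mul_pow, ← mul_pow, ← hm', ← hn']
      _ = Nat.gcd m n ^ 2 * Nat.gcd (m' ^ 2) (n' ^ 2) := Nat.gcd_mul_left _ _ _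
      _ = Nat.gcd m n ^ 2 := by rw [show Nat.gcd (m' ^ 2) (n' ^ 2) = 1 from Nat.Coprime.pow 2 2 hcop, mul_one]

lemma sq_dvd_contra {t : ℕ} (hsf : Squarefree t) {p : ℕ} (pp : p.Prime) {e : ℕ}
    (hpe : ¬ (p:ℤ) ∣ (e:ℤ)) (hsq : (p:ℤ)^2 ∣ (t:ℤ) * (e:ℤ)^2) : False := by
  have hp' : Prime (p:ℤ) := Nat.prime_iff_prime_int.mp pp
  have copr : IsCoprime ((p:ℤ)^2) ((e:ℤ)^2) :=
    ((hp'.coprime_iff_not_dvd).mpr hpe).pow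
  have hdt : (p:ℤ)^2 ∣ (t:ℤ) := copr.dvd_of_dvd_mul_right hsq
  have hdt' : p * p ∣ t := by
    rw [← Int.natCast_dvd_natCast]
    push_cast
    rwa [← pow_two]
  have := hsf p hdt'
  rw [Nat.isUnit_iff] at this
  exact pp.ne_one this

set_option maxHeartbeats 2000000 in
theorem growth (t : ℕ) (hsf : Squarefree t) (ht : 0 < t) (x : ℚ) (hx : InS t x) :
    max x.num.natAbs x.den < max (fdbl t x).num.natAbs (fdbl t x).den := by
  obtain ⟨u, v, w, hu, hv, hw, h1, h2, h3⟩ := hx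
  set a : ℤ := u.num with ha_def
  set e : ℕ := u.den with he_def
  set b : ℤ := v.num with hb_def
  set c : ℤ := w.num with hc_def
  have he0 : 0 < e := u.pos
  have ha0 : a ≠ 0 := Rat.num_ne_zero.mpr hu
  have hb0 : b ≠ 0 := Rat.num_ne_zero.mpr hv
  have hc0 : c ≠ 0 := Rat.num_ne_zero.mpr hw
  have he0' : ((e:ℤ)) ≠ 0 := by exact_mod_cast he0.ne'
  have hxnum : x.num = a ^ 2 := by rw [h1, Rat.num_pow]
  have hxden : x.den = e ^ 2 := by rw [h1, Rat.den_pow]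
  -- integer relations
  have h2' : x - ((t : ℤ) : ℚ) = v ^ 2 := by push_cast; exact h2
  have h3' : x - (((-(t:ℤ)) : ℤ) : ℚ) = w ^ 2 := by push_cast [sub_neg_eq_add]; exact h3
  have hb2 : b ^ 2 = a ^ 2 - t * (e:ℤ) ^ 2 := by
    have hn := (rat_sub_int_num_den x (t:ℤ)).1
    rw [h2', Rat.num_pow, hxnum, hxden] at hn
    rw [hn]; push_cast; ring
  have hc2 : c ^ 2 = a ^ 2 + t * (e:ℤ) ^ 2 := by
    have hn := (rat_sub_int_num_den x (-(t:ℤ))).1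
    rw [h3', Rat.num_pow, hxnum, hxden] at hn
    rw [hn]; push_cast; ring
  have hbden : v.den = e := by
    have hd := (rat_sub_int_num_den x (t:ℤ)).2
    rw [h2', Rat.den_pow, hxden] at hd
    exact Nat.pow_left_injective (by norm_num) hd
  have hcden : w.den = e := by
    have hd := (rat_sub_int_num_den x (-(t:ℤ))).2
    rw [h3', Rat.den_pow, hxden] at hd
    exact Nat.pow_left_injective (by norm_num) hd
  -- coprimality with e
  have cop_ae : IsCoprime a (e:ℤ) := by
    rw [Int.isCoprime_iff_gcd_eq_one]
    simpa [Int.gcd] using u.reduced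
  have cop_be : IsCoprime b (e:ℤ) := by
    rw [Int.isCoprime_iff_gcd_eq_one]
    have := v.reduced
    rw [hbden] at this
    simpa [Int.gcd] using this
  have cop_ce : IsCoprime c (e:ℤ) := by
    rw [Int.isCoprime_iff_gcd_eq_one]
    have := w.reduced
    rw [hcden] at this
    simpa [Int.gcd] using this
  -- coprimality with t
  have cop_at : IsCoprime a (t:ℤ) := by
    rw [Int.isCoprime_iff_gcd_eq_one]
    by_contra hne
    obtain ⟨p, pp, hpd⟩ := Nat.exists_prime_and_dvd hne
    have hp' : Prime (p:ℤ) := Nat.prime_iff_prime_int.mp pp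
    have hpa : (p:ℤ) ∣ a :=
      dvd_trans (Int.natCast_dvd_natCast.mpr hpd) (Int.gcd_dvd_left _ _)
    have hpt : (p:ℤ) ∣ (t:ℤ) :=
      dvd_trans (Int.natCast_dvd_natCast.mpr hpd) (Int.gcd_dvd_right _ _)
    have hpb : (p:ℤ) ∣ b := by
      apply hp'.dvd_of_dvd_pow (n := 2)
      rw [hb2]
      exact dvd_sub (dvd_pow hpa two_ne_zero) (hpt.mul_right _)
    have hpe : ¬ (p:ℤ) ∣ (e:ℤ) := by
      intro hdvd
      exact hp'.not_unit (cop_ae.isUnit_of_dvd' hpa hdvd)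
    apply sq_dvd_contra hsf pp hpe
    have hte : (t:ℤ) * (e:ℤ)^2 = a^2 - b^2 := by linarith [hb2]
    rw [hte]
    exact dvd_sub (pow_dvd_pow_of_dvd hpa 2) (pow_dvd_pow_of_dvd hpb 2)
  have cop_bt : IsCoprime b (t:ℤ) := by
    rw [Int.isCoprime_iff_gcd_eq_one]
    by_contra hne
    obtain ⟨p, pp, hpd⟩ := Nat.exists_prime_and_dvd hne
    have hp' : Prime (p:ℤ) := Nat.prime_iff_prime_int.mp pp
    have hpb : (p:ℤ) ∣ b :=
      dvd_trans (Int.natCast_dvd_natCast.mpr hpd) (Int.gcd_dvd_left _ _)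
    have hpt : (p:ℤ) ∣ (t:ℤ) :=
      dvd_trans (Int.natCast_dvd_natCast.mpr hpd) (Int.gcd_dvd_right _ _)
    have hpa : (p:ℤ) ∣ a := by
      apply hp'.dvd_of_dvd_pow (n := 2)
      have : a^2 = b^2 + t*(e:ℤ)^2 := by linarith [hb2]
      rw [this]
      exact dvd_add (dvd_pow hpb two_ne_zero) (hpt.mul_right _)
    have hpe : ¬ (p:ℤ) ∣ (e:ℤ) := by
      intro hdvd
      exact hp'.not_unit (cop_be.isUnit_of_dvd' hpb hdvd)
    apply sq_dvd_contra hsf pp hpe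
    have hte : (t:ℤ) * (e:ℤ)^2 = a^2 - b^2 := by linarith [hb2]
    rw [hte]
    exact dvd_sub (pow_dvd_pow_of_dvd hpa 2) (pow_dvd_pow_of_dvd hpb 2)
  have cop_ct : IsCoprime c (t:ℤ) := by
    rw [Int.isCoprime_iff_gcd_eq_one]
    by_contra hne
    obtain ⟨p, pp, hpd⟩ := Nat.exists_prime_and_dvd hne
    have hp' : Prime (p:ℤ) := Nat.prime_iff_prime_int.mp pp
    have hpc : (p:ℤ) ∣ c :=
      dvd_trans (Int.natCast_dvd_natCast.mpr hpd) (Int.gcd_dvd_left _ _)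
    have hpt : (p:ℤ) ∣ (t:ℤ) :=
      dvd_trans (Int.natCast_dvd_natCast.mpr hpd) (Int.gcd_dvd_right _ _)
    have hpa : (p:ℤ) ∣ a := by
      apply hp'.dvd_of_dvd_pow (n := 2)
      have : a^2 = c^2 - t*(e:ℤ)^2 := by linarith [hc2]
      rw [this]
      exact dvd_sub (dvd_pow hpc two_ne_zero) (hpt.mul_right _)
    have hpe : ¬ (p:ℤ) ∣ (e:ℤ) := by
      intro hdvd
      exact hp'.not_unit (cop_ce.isUnit_of_dvd' hpc hdvd)
    apply sq_dvd_contra hsf pp hpe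
    have hte : (t:ℤ) * (e:ℤ)^2 = c^2 - a^2 := by linarith [hc2]
    rw [hte]
    exact dvd_sub (pow_dvd_pow_of_dvd hpc 2) (pow_dvd_pow_of_dvd hpa 2)
  -- K and the key gcd bound
  set K : ℤ := a^4 + (t:ℤ)^2*(e:ℤ)^4 with hK_def
  have hK4 : ¬ ((4:ℤ) ∣ K) := by
    intro hdvd
    have h40 : ((K : ZMod 4)) = 0 := by
      exact_mod_cast (ZMod.intCast_zmod_eq_zero_iff_dvd K 4).mpr (by exact_mod_cast hdvd)
    rw [hK_def] at h40
    push_cast at h40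
    have claim : ∀ α β γ : ZMod 4, α^4 + β^2*γ^4 = 0 → (2*α = 0 ∧ 2*(β*γ) = 0) := by decide
    obtain ⟨hα, hβγ⟩ := claim _ _ _ h40
    have h2a : (2:ℤ) ∣ a := by
      have h0 : (((2*a : ℤ)) : ZMod 4) = 0 := by push_cast; rw [← hα]
      have h4d : (4:ℤ) ∣ 2*a := by exact_mod_cast (ZMod.intCast_zmod_eq_zero_iff_dvd _ 4).mp h0
      obtain ⟨r, hr⟩ := h4d
      exact ⟨r, by omega⟩
    have h2te : 2 ∣ t * e := by
      have h0 : (((2*(t*e) : ℕ)) : ZMod 4) = 0 := by push_cast; rw [← hβγ]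
      have h4d : (4:ℕ) ∣ 2*(t*e) := by
        exact_mod_cast (ZMod.natCast_eq_zero_iff _ 4).mp h0
      omega
    rcases (Nat.Prime.dvd_mul Nat.prime_two).mp h2te with h2t | h2e
    · have : IsUnit (2:ℤ) := cop_at.isUnit_of_dvd' h2a (by exact_mod_cast Int.natCast_dvd_natCast.mpr h2t)
      rw [Int.isUnit_iff] at this
      omega
    · have : IsUnit (2:ℤ) := cop_ae.isUnit_of_dvd' h2a (by exact_mod_cast Int.natCast_dvd_natCast.mpr h2e)
      rw [Int.isUnit_iff] at this
      omega
  have cop_Ka : IsCoprime K a := by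
    have h0 : IsCoprime ((t:ℤ)^2*(e:ℤ)^4) a := (cop_at.symm.pow_left).mul_left (cop_ae.symm.pow_left)
    have h1' := h0.add_mul_left_left (a^3)
    have heq' : (t:ℤ)^2*(e:ℤ)^4 + a*a^3 = K := by rw [hK_def]; ring
    rwa [heq'] at h1'
  have cop_Ke : IsCoprime K (e:ℤ) := by
    have h0 : IsCoprime (a^4) (e:ℤ) := cop_ae.pow_left
    have h1' := h0.add_mul_left_left ((t:ℤ)^2*(e:ℤ)^3)
    have heq' : a^4 + (e:ℤ)*((t:ℤ)^2*(e:ℤ)^3) = K := by rw [hK_def]; ring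
    rwa [heq'] at h1'
  have gKb : (Int.gcd K b : ℤ) ∣ 2 := by
    have hd1 : (Int.gcd K b : ℤ) ∣ K := Int.gcd_dvd_left _ _
    have hd2 : (Int.gcd K b : ℤ) ∣ b := Int.gcd_dvd_right _ _
    have key : K - b*(b^3 + 2*b*((t:ℤ)*(e:ℤ)^2)) = 2*((t:ℤ)^2*(e:ℤ)^4) := by
      rw [hK_def]; linear_combination (-(a^2+b^2+(t:ℤ)*(e:ℤ)^2)) * hb2
    have hdvd2 : (Int.gcd K b : ℤ) ∣ 2*((t:ℤ)^2*(e:ℤ)^4) := by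
      rw [← key]; exact dvd_sub hd1 (hd2.mul_right _)
    have copg : IsCoprime ((Int.gcd K b : ℤ)) ((t:ℤ)^2*(e:ℤ)^4) :=
      IsCoprime.of_isCoprime_of_dvd_left ((cop_bt.pow_right).mul_right (cop_be.pow_right)) hd2
    exact copg.dvd_of_dvd_mul_right hdvd2
  have gKc : (Int.gcd K c : ℤ) ∣ 2 := by
    have hd1 : (Int.gcd K c : ℤ) ∣ K := Int.gcd_dvd_left _ _
    have hd2 : (Int.gcd K c : ℤ) ∣ c := Int.gcd_dvd_right _ _
    have key : K - c*(c^3 - 2*c*((t:ℤ)*(e:ℤ)^2)) = 2*((t:ℤ)^2*(e:ℤ)^4) := by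
      rw [hK_def]; linear_combination (-(a^2+c^2-(t:ℤ)*(e:ℤ)^2)) * hc2
    have hdvd2 : (Int.gcd K c : ℤ) ∣ 2*((t:ℤ)^2*(e:ℤ)^4) := by
      rw [← key]; exact dvd_sub hd1 (hd2.mul_right _)
    have copg : IsCoprime ((Int.gcd K c : ℤ)) ((t:ℤ)^2*(e:ℤ)^4) :=
      IsCoprime.of_isCoprime_of_dvd_left ((cop_ct.pow_right).mul_right (cop_ce.pow_right)) hd2
    exact copg.dvd_of_dvd_mul_right hdvd2
  -- nat level
  have h2a2 : (0:ℤ) < a^2 := (sq_nonneg a).lt_of_ne' (pow_ne_zero 2 ha0)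
  have hKpos : 0 < K := by
    rw [hK_def]
    have hh : (0:ℤ) ≤ (t:ℤ)^2*(e:ℤ)^4 := by positivity
    nlinarith [h2a2]
  set R' : ℤ := a*b*c*(e:ℤ) with hR'_def
  set KA := K.natAbs with hKA_def
  have hG16 : Int.gcd (K^2) (4*R'^2) ∣ 16 := by
    have c1 : Nat.gcd KA a.natAbs = 1 := Int.isCoprime_iff_gcd_eq_one.mp cop_Ka
    have cE : Nat.gcd KA e = 1 := by
      have := Int.isCoprime_iff_gcd_eq_one.mp cop_Ke
      simpa [Int.gcd] using this
    have cB : Nat.gcd KA b.natAbs ∣ 2 := by exact_mod_cast gKb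
    have cC : Nat.gcd KA c.natAbs ∣ 2 := by exact_mod_cast gKc
    have hRnat : R'.natAbs = a.natAbs * (e * (b.natAbs * c.natAbs)) := by
      rw [hR'_def]
      simp [Int.natAbs_mul]
      ring
    have step4 : Nat.gcd KA R'.natAbs ∣ 2 := by
      rw [hRnat, Nat.Coprime.gcd_mul_left_cancel_right _ (Nat.Coprime.symm c1),
        Nat.Coprime.gcd_mul_left_cancel_right _ (Nat.Coprime.symm cE)]
      have hd4 : Nat.gcd KA (b.natAbs * c.natAbs) ∣ 4 := by
        have := gcd_mul_dvd_mul_gcd KA b.natAbs c.natAbs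
        rw [gcd_eq_nat_gcd, gcd_eq_nat_gcd, gcd_eq_nat_gcd] at this
        exact this.trans (Nat.mul_dvd_mul cB cC)
      apply dvd4_helper _ hd4
      intro h4d
      exact hK4 (by exact_mod_cast Int.natCast_dvd.mpr (h4d.trans (Nat.gcd_dvd_left _ _)))
    have e1 : Int.gcd (K^2) (4*R'^2) = Nat.gcd (KA^2) (4*R'.natAbs^2) := by
      simp [Int.gcd, Int.natAbs_mul, Int.natAbs_pow]
      rfl
    rw [e1]
    have step1 : Nat.gcd (KA^2) (4*R'.natAbs^2) ∣ Nat.gcd (KA^2) 4 * Nat.gcd (KA^2) (R'.natAbs^2) := by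
      rw [← gcd_eq_nat_gcd, ← gcd_eq_nat_gcd, ← gcd_eq_nat_gcd]
      exact gcd_mul_dvd_mul_gcd _ _ _
    have step2 : Nat.gcd (KA^2) 4 ∣ 4 := Nat.gcd_dvd_right _ _
    have step3 : Nat.gcd (KA^2) (R'.natAbs^2) ∣ 4 := by
      rw [nat_gcd_sq]
      calc Nat.gcd KA R'.natAbs ^ 2 ∣ 2^2 := pow_dvd_pow_of_dvd step4 2
        _ = 4 := by norm_num
    calc Nat.gcd (KA^2) (4*R'.natAbs^2) ∣ Nat.gcd (KA^2) 4 * Nat.gcd (KA^2) (R'.natAbs^2) := step1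
      _ ∣ 4 * 4 := Nat.mul_dvd_mul step2 step3
      _ = 16 := by norm_num
  -- the rational identity
  have habc0 : ((a*b*c : ℤ) : ℚ) ≠ 0 := by
    push_cast
    simp [ha0, hb0, hc0]
  have hD0 : (0:ℤ) < 4*R'^2 := by
    have : R' ≠ 0 := by
      rw [hR'_def]
      simp [ha0, hb0, hc0, he0', he0.ne']
    positivity
  have hxa : x = ((a:ℚ)/(e:ℚ))^2 := by
    rw [h1, ← Rat.num_div_den u]
  have hxb : x - t = ((b:ℚ)/(e:ℚ))^2 := by
    rw [h2, ← Rat.num_div_den v, hbden]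
  have hxc : x + t = ((c:ℚ)/(e:ℚ))^2 := by
    rw [h3, ← Rat.num_div_den w, hcden]
  have hfd : fdbl t x = ((K^2 : ℤ) : ℚ) / ((4*R'^2 : ℤ) : ℚ) := by
    rw [fdbl]
    have hsplit : x ^ 3 - (t:ℚ)^2*x = x * (x - t) * (x + t) := by ring
    have hx2 : x ^ 2 + (t:ℚ)^2 = (((K:ℤ):ℚ))/((e:ℚ))^4 := by
      rw [hxa, hK_def]
      have he' : ((e:ℚ)) ≠ 0 := by exact_mod_cast he0.ne'
      field_simp
      push_cast
      ring
    rw [hsplit, hx2, hxb, hxc, hxa]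
    have he' : ((e:ℚ)) ≠ 0 := by exact_mod_cast he0.ne'
    have ha' : ((a:ℚ)) ≠ 0 := by exact_mod_cast ha0
    have hb' : ((b:ℚ)) ≠ 0 := by exact_mod_cast hb0
    have hc' : ((c:ℚ)) ≠ 0 := by exact_mod_cast hc0
    rw [hR'_def]
    push_cast
    field_simp
  -- numerator bound
  have hqD : fdbl t x * ((4*R'^2 : ℤ) : ℚ) = ((K^2 : ℤ) : ℚ) := by
    rw [hfd]
    have : ((4*R'^2 : ℤ) : ℚ) ≠ 0 := by
      exact_mod_cast hD0.ne'
    field_simp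
  have hcross : (fdbl t x).num * (4*R'^2) = K^2 * ((fdbl t x).den : ℤ) := by
    have hcast : (((fdbl t x).num * (4*R'^2) : ℤ) : ℚ) = ((K^2 * ((fdbl t x).den : ℤ) : ℤ) : ℚ) := by
      push_cast
      rw [rat_num_mul_den (fdbl t x)]
      push_cast at hqD
      linear_combination ((fdbl t x).den : ℚ) * hqD
    exact_mod_cast hcast
  have hdenpos : (0:ℤ) < ((fdbl t x).den : ℤ) := by exact_mod_cast (fdbl t x).pos
  have hdencop : IsCoprime ((fdbl t x).den : ℤ) ((fdbl t x).num) := by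
    rw [Int.isCoprime_iff_gcd_eq_one, Int.gcd_comm]
    simpa [Int.gcd] using (fdbl t x).reduced
  have hdendvd : ((fdbl t x).den : ℤ) ∣ 4*R'^2 := by
    apply hdencop.dvd_of_dvd_mul_right
    exact ⟨K^2, by linarith [hcross]⟩
  obtain ⟨s, hs⟩ := hdendvd
  have hNs : (fdbl t x).num * s = K^2 := by
    have h0 : ((fdbl t x).den : ℤ) * ((fdbl t x).num * s) = ((fdbl t x).den : ℤ) * K^2 := by
      rw [← mul_assoc]
      rw [mul_comm (((fdbl t x).den : ℤ)) ((fdbl t x).num), mul_assoc, ← hs]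
      linarith [hcross]
    exact mul_left_cancel₀ hdenpos.ne' h0
  have hspos : 0 < s := by
    rcases lt_trichotomy s 0 with h | h | h
    · nlinarith [hD0, hdenpos, hs]
    · rw [h, mul_zero] at hs; omega
    · exact h
  have hsdvd : s ∣ 16 := by
    have h1' : s ∣ K^2 := Dvd.intro_left _ hNs
    have h2' : s ∣ 4*R'^2 := Dvd.intro_left _ hs.symm
    have := Int.dvd_coe_gcd h1' h2'
    exact this.trans (by exact_mod_cast Int.natCast_dvd_natCast.mpr hG16)
  have hsle : s ≤ 16 := Int.le_of_dvd (by norm_num) hsdvd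
  have hNpos : 0 < (fdbl t x).num := by
    nlinarith [hNs, hKpos, hspos]
  have hK16 : K^2 ≤ 16 * (fdbl t x).num := by
    calc K^2 = (fdbl t x).num * s := hNs.symm
      _ ≤ (fdbl t x).num * 16 := by nlinarith [hNpos, hsle]
      _ = 16 * (fdbl t x).num := by ring
  -- size comparison
  set M := max x.num.natAbs x.den with hM_def
  have ht1 : (1:ℤ) ≤ (t:ℤ) := by exact_mod_cast ht
  have hM2 : (M:ℤ) = max (a^2) ((e:ℤ)^2) := by
    rw [hM_def, hxnum, hxden]
    push_cast [Int.natAbs_pow]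
    rw [sq_abs]
  have ht2 : (1:ℤ) ≤ (t:ℤ)^2 := by
    simpa using pow_le_pow_left₀ (by norm_num : (0:ℤ) ≤ 1) ht1 2
  have hMK : ((M:ℤ))^2 ≤ K := by
    rw [hK_def, hM2]
    rcases le_total (a^2) ((e:ℤ)^2) with h | h
    · rw [max_eq_right h]
      have h1' : ((e:ℤ)^2)^2 ≤ (t:ℤ)^2*((e:ℤ)^2)^2 :=
        le_mul_of_one_le_left (by positivity) ht2
      have h2' : (t:ℤ)^2*((e:ℤ)^2)^2 = (t:ℤ)^2*(e:ℤ)^4 := by ring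
      have h3' : (0:ℤ) ≤ a^4 := by positivity
      linarith only [h1', h2', h3', h1'.trans_eq h2']
    · rw [max_eq_left h]
      have h1' : (a^2)^2 = a^4 := by ring
      have h3' : (0:ℤ) ≤ (t:ℤ)^2*(e:ℤ)^4 := by positivity
      linarith only [h1', h3']
  have hM3 : 3 ≤ M := by
    by_contra hlt
    push_neg at hlt
    have hMle : M ≤ 2 := by omega
    have hA : x.num.natAbs ≤ 2 := le_trans (le_max_left _ _) hMle
    have hE : x.den ≤ 2 := le_trans (le_max_right _ _) hMle
    rw [hxnum, Int.natAbs_pow, pow_two] at hA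
    rw [hxden, pow_two] at hE
    have hA1 : a.natAbs = 1 := by
      have h0 : a.natAbs ≠ 0 := Int.natAbs_ne_zero.mpr ha0
      rcases Nat.lt_or_ge a.natAbs 2 with h | h
      · omega
      · exfalso
        have h4 : 2*2 ≤ a.natAbs * a.natAbs := Nat.mul_le_mul h h
        have : (4:ℕ) ≤ 2 := le_trans h4 hA
        omega
    have hE1 : e = 1 := by
      rcases Nat.lt_or_ge e 2 with h | h
      · omega
      · exfalso
        have h4 : 2*2 ≤ e * e := Nat.mul_le_mul h h
        have : (4:ℕ) ≤ 2 := le_trans h4 hE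
        omega
    have ha2 : a^2 = 1 := by
      have hh := Int.natAbs_sq a
      rw [hA1] at hh
      simpa using hh.symm
    have hbsq : 1 ≤ b^2 := by
      have h0 : 0 < b^2 := (sq_nonneg b).lt_of_ne' (pow_ne_zero 2 hb0)
      omega
    rw [hb2, ha2, hE1] at hbsq
    push_cast at hbsq
    omega
  have hMnn : (0:ℤ) ≤ (M:ℤ) := by positivity
  have hM3' : (3:ℤ) ≤ (M:ℤ) := by exact_mod_cast hM3
  have hMlt : (M:ℤ) < (fdbl t x).num := by
    have h1' : ((M:ℤ))^2 * ((M:ℤ))^2 ≤ K * K :=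
      mul_le_mul hMK hMK (by positivity) hKpos.le
    have e1 : (M:ℤ)^4 ≤ 16*(fdbl t x).num := by
      calc (M:ℤ)^4 = (M:ℤ)^2*(M:ℤ)^2 := by ring
        _ ≤ K*K := h1'
        _ = K^2 := by ring
        _ ≤ 16*(fdbl t x).num := hK16
    have m2' : (3:ℤ)*3 ≤ (M:ℤ)*(M:ℤ) := mul_le_mul hM3' hM3' (by norm_num) hMnn
    have m3' : (27:ℤ) ≤ (M:ℤ)*((M:ℤ)*(M:ℤ)) := by
      calc (27:ℤ) = 3*(3*3) := by norm_num
        _ ≤ (M:ℤ)*((M:ℤ)*(M:ℤ)) := mul_le_mul hM3' m2' (by norm_num) hMnn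
    have m4 : 27*(M:ℤ) ≤ (M:ℤ)^4 := by
      have hmul := mul_le_mul_of_nonneg_left m3' hMnn
      calc 27*(M:ℤ) = (M:ℤ)*27 := by ring
        _ ≤ (M:ℤ)*((M:ℤ)*((M:ℤ)*(M:ℤ))) := hmul
        _ = (M:ℤ)^4 := by ring
    linarith only [e1, m4, hM3']
  have hfinal : M < (fdbl t x).num.natAbs := by
    have hcast : ((fdbl t x).num.natAbs : ℤ) = (fdbl t x).num := Int.natAbs_of_nonneg hNpos.le
    have h0 := hMlt
    rw [← hcast] at h0
    exact_mod_cast h0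
  exact lt_of_lt_of_le hfinal (le_max_left _ _)

lemma fdbl_mem_S (t : ℕ) (ht : 0 < t) (x y : ℚ) (hy : y ≠ 0)
    (heq : y ^ 2 = x ^ 3 - (t:ℚ) ^ 2 * x) : InS t (fdbl t x) := by
  have ht' : (t:ℚ) ≠ 0 := by exact_mod_cast ht.ne'
  have hnum : x ^ 2 + (t:ℚ) ^ 2 ≠ 0 := by positivity
  have hv0 : x ^ 2 - 2 * t * x - (t:ℚ) ^ 2 ≠ 0 := by
    intro h
    apply no_rat_sq_two ((x - t) / t)
    field_simp
    linear_combination h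
  have hw0 : x ^ 2 + 2 * t * x - (t:ℚ) ^ 2 ≠ 0 := by
    intro h
    apply no_rat_sq_two ((x + t) / t)
    field_simp
    linear_combination h
  have h2y : 2 * y ≠ 0 := by simpa using hy
  refine ⟨(x ^ 2 + t ^ 2) / (2 * y), (x ^ 2 - 2 * t * x - t ^ 2) / (2 * y),
    (x ^ 2 + 2 * t * x - t ^ 2) / (2 * y), div_ne_zero hnum h2y, div_ne_zero hv0 h2y,
    div_ne_zero hw0 h2y, ?_, ?_, ?_⟩
  · rw [fdbl, ← heq]
    field_simp
    ring
  · rw [fdbl, ← heq]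
    field_simp
    linear_combination (-16 * (t:ℚ)) * heq
  · rw [fdbl, ← heq]
    field_simp
    linear_combination (16 * (t:ℚ)) * heq

lemma InS.y_exists {t : ℕ} {x : ℚ} (h : InS t x) :
    ∃ y : ℚ, y ≠ 0 ∧ y ^ 2 = x ^ 3 - (t:ℚ) ^ 2 * x := by
  obtain ⟨u, v, w, hu, hv, hw, h1, h2, h3⟩ := h
  refine ⟨u * v * w, by simp [hu, hv, hw], ?_⟩
  have : x ^ 3 - (t:ℚ) ^ 2 * x = x * (x - t) * (x + t) := by ring
  rw [this, h2, h3, h1]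
  ring

lemma InS.fdbl_mem {t : ℕ} (ht : 0 < t) {x : ℚ} (h : InS t x) : InS t (fdbl t x) := by
  obtain ⟨y, hy, heq⟩ := h.y_exists
  exact fdbl_mem_S t ht x y hy heq

lemma Et_nonsingular_s6 (t : ℕ) {x y : ℚ} (hy : y ≠ 0)
    (heq : y ^ 2 = x ^ 3 - (t:ℚ) ^ 2 * x) : (Et t).Nonsingular x y := by
  rw [WeierstrassCurve.Affine.nonsingular_iff, WeierstrassCurve.Affine.equation_iff]
  simp only [Et]
  constructor
  · linear_combination heq
  · right
    intro hcon
    apply hy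
    linarith [hcon]

lemma Et_equation {t : ℕ} {x y : ℚ} (h : (Et t).Nonsingular x y) :
    y ^ 2 = x ^ 3 - (t:ℚ) ^ 2 * x := by
  have := h.1
  rw [WeierstrassCurve.Affine.equation_iff] at this
  simp only [Et] at this
  linear_combination this

/-- From a nonsingular point with `y ≠ 0` we get a congruent-number triangle. -/
lemma IsCongruent_of_point (t : ℕ) (ht : 0 < t) {x y : ℚ} (hy : y ≠ 0)
    (heq : y ^ 2 = x ^ 3 - (t:ℚ) ^ 2 * x) : IsCongruent t := by
  have ht' : (0:ℚ) < t := by exact_mod_cast ht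
  have hy2 : (0:ℚ) < y ^ 2 := (sq_nonneg y).lt_of_ne' (pow_ne_zero 2 hy)
  have hprod : x * (x - t) * (x + t) ≠ 0 := by
    intro h0
    rw [show x ^ 3 - (t:ℚ)^2*x = x * (x - t) * (x + t) from by ring, h0] at heq
    exact hy (by simpa using pow_eq_zero_iff (n := 2) (by norm_num) |>.mp heq)
  have hx0 : x ≠ 0 := by intro h; apply hprod; rw [h]; ring
  have hxt : x - t ≠ 0 := fun h => hprod (by rw [h]; ring)
  have hxt' : x + t ≠ 0 := fun h => hprod (by rw [h]; ring)
  have hx2t2 : x ^ 2 - (t:ℚ) ^ 2 ≠ 0 := by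
    intro h
    rcases mul_eq_zero.mp (show (x - t) * (x + t) = 0 from by linear_combination h) with h' | h'
    · exact hxt h'
    · exact hxt' h'
  refine ⟨|(x ^ 2 - t ^ 2) / y|, |2 * t * x / y|, (x ^ 2 + t ^ 2) / |y|, ?_, ?_, ?_, ?_, ?_⟩
  · exact abs_pos.mpr (div_ne_zero hx2t2 hy)
  · refine abs_pos.mpr (div_ne_zero ?_ hy)
    positivity
  · apply div_pos (by positivity) (abs_pos.mpr hy)
  · rw [sq_abs, sq_abs, div_pow, div_pow, div_pow, sq_abs]
    rw [← add_div]
    congr 1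
    ring
  · have hiden : (x ^ 2 - t ^ 2) / y * (2 * t * x / y) = 2 * t := by
      field_simp
      linear_combination (-1) * heq
    rw [← abs_mul, hiden]
    rw [abs_of_pos (by positivity : (0:ℚ) < 2 * t)]
    ring

set_option maxHeartbeats 1000000 in
/-- A squarefree positive integer `t` is a congruent number if and only if the group of
rational points of `Eₜ : Y² = X³ − t²X` is infinite. -/
theorem isCongruent_iff_infinite (t : ℕ) (hsf : Squarefree t) (ht : 0 < t) :
    IsCongruent t ↔ Infinite (Et t).Point := by
  have ht' : (0:ℚ) < t := by exact_mod_cast ht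
  constructor
  · rintro ⟨a, b, c, ha, hb, hc, hpyth, harea⟩
    -- initial point
    set x₀ : ℚ := (c/2)^2 with hx₀
    set y₀ : ℚ := c*(a^2-b^2)/8 with hy₀
    have hab : a ≠ b := by
      intro h
      apply no_rat_sq_two (c / a)
      rw [div_pow]
      rw [eq_comm, eq_div_iff (by positivity : a ^ 2 ≠ 0)]
      linear_combination (a+b)*h + hpyth
    have hy0 : y₀ ≠ 0 := by
      rw [hy₀]
      have h1 : a^2 - b^2 ≠ 0 := by
        intro h
        have : (a-b)*(a+b) = 0 := by linear_combination h
        rcases mul_eq_zero.mp this with h' | h'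
        · exact hab (by linarith)
        · linarith
      positivity
    have heq0 : y₀ ^ 2 = x₀ ^ 3 - (t:ℚ) ^ 2 * x₀ := by
      rw [hx₀, hy₀, ← harea]
      linear_combination (c^2*(a^2+b^2+c^2)/64) * hpyth
    -- iterated sequence
    set seq : ℕ → ℚ := fun n => (fdbl t)^[n] (fdbl t x₀) with hseq
    have hseq_succ : ∀ n, seq (n+1) = fdbl t (seq n) := by
      intro n
      rw [hseq]
      exact Function.iterate_succ_apply' (fdbl t) n (fdbl t x₀)
    have hS : ∀ n, InS t (seq n) := by
      intro n
      induction n with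
      | zero => exact fdbl_mem_S t ht x₀ y₀ hy0 heq0
      | succ n ih => rw [hseq_succ]; exact ih.fdbl_mem ht
    have hmono : StrictMono (fun n => max (seq n).num.natAbs (seq n).den) := by
      apply strictMono_nat_of_lt_succ
      intro n
      rw [hseq_succ]
      exact growth t hsf ht (seq n) (hS n)
    have hseq_inj : Function.Injective seq := by
      intro m n h
      by_contra hne
      rcases Nat.lt_or_ge m n with h' | h'
      · exact absurd (congrArg (fun q => max q.num.natAbs q.den) h) (hmono h').ne
      · have h'' : n < m := by omega
        exact absurd (congrArg (fun q => max q.num.natAbs q.den) h).symm (hmono h'').ne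
    -- build points
    have hYn : ∀ n, ∃ y : ℚ, y ≠ 0 ∧ y ^ 2 = (seq n) ^ 3 - (t:ℚ) ^ 2 * (seq n) :=
      fun n => (hS n).y_exists
    choose Y hY0 hYeq using hYn
    let g : ℕ → (Et t).Point := fun n =>
      WeierstrassCurve.Affine.Point.some _ _ (Et_nonsingular_s6 t (hY0 n) (hYeq n))
    have hg : Function.Injective g := by
      intro m n h
      simp only [g, WeierstrassCurve.Affine.Point.some.injEq] at h
      exact hseq_inj h.1
    exact Infinite.of_injective g hg
  · intro hinf
    -- find a point with y ≠ 0
    have hex : ∃ x y : ℚ, (Et t).Nonsingular x y ∧ y ≠ 0 := by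
      by_contra hno
      push_neg at hno
      let f : (Et t).Point → Option ℚ := fun P =>
        match P with
        | WeierstrassCurve.Affine.Point.zero => none
        | @WeierstrassCurve.Affine.Point.some _ _ _ x _ _ => some x
      have hf : Function.Injective f := by
        intro P Q h
        cases P with
        | zero =>
          cases Q with
          | zero => rfl
          | some hQ => simp [f] at h
        | some _ _ hP =>
          cases Q with
          | zero => simp [f] at h
          | some _ _ hQ =>
            simp only [f, Option.some.injEq] at h
            rename_i x₁ y₁ x₂ y₂
            have hy1 : y₁ = 0 := hno _ _ hP
            have hy2 : y₂ = 0 := hno _ _ hQ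
            subst h
            simp [WeierstrassCurve.Affine.Point.some.injEq, hy1, hy2]
      have hrange : ∀ P, f P ∈ ({none, some 0, some (t:ℚ), some (-(t:ℚ))} : Set (Option ℚ)) := by
        intro P
        cases P with
        | zero => simp [f]
        | some _ _ hP =>
          rename_i x y
          have hy : y = 0 := hno _ _ hP
          have heq := Et_equation hP
          rw [hy] at heq
          have : x * (x - t) * (x + t) = 0 := by linear_combination -heq
          rcases mul_eq_zero.mp this with h' | h'
          · rcases mul_eq_zero.mp h' with h'' | h''
            · simp [f, h'']
            · have : x = t := by linarith
              simp [f, this]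
          · have : x = -(t:ℚ) := by linarith
            simp [f, this]
      have hfin : Set.Finite ({none, some 0, some (t:ℚ), some (-(t:ℚ))} : Set (Option ℚ)) := by
        apply Set.Finite.insert
        apply Set.Finite.insert
        apply Set.Finite.insert
        exact Set.finite_singleton _
      have : Finite (Et t).Point := by
        have := hfin.to_subtype
        exact Finite.of_injective (fun P => (⟨f P, hrange P⟩ :
          ({none, some 0, some (t:ℚ), some (-(t:ℚ))} : Set (Option ℚ))))
          (fun P Q h => hf (congrArg Subtype.val h))
      exact absurd this (Infinite.not_finite)
    obtain ⟨x, y, hns, hy⟩ := hex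
    exact IsCongruent_of_point t ht hy (Et_equation hns)
end

section
/- Let t be a nonzero rational number and let P = (X, Y) be a rational point on E_t : Y² = X³ − t²X with Y ≠ 0. Let T(X, Y) = ((X² − t²)/Y, 2tX/Y, (X² + t²)/Y) = (a, b, c). Then under the group law: T(−P) = (−a, −b, −c), T(P + (0, 0)) = (−a, −b, c), T(P + (t, 0)) = (−b, −a, −c), and T(P + (−t, 0)) = (b, a, −c). -/
/-- For `t ≠ 0`, the points `(0, 0)`, `(t, 0)` and `(−t, 0)` are nonsingular points of `Eₜ`. -/
lemma Et_nonsingular (t x : ℚ) (ht : t ≠ 0) (hx : x = 0 ∨ x = t ∨ x = -t) :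
    (Et t).Nonsingular x 0 := by
  rw [WeierstrassCurve.Affine.nonsingular_iff]
  have ht2 : t ^ 2 ≠ 0 := pow_ne_zero 2 ht
  constructor
  · rw [WeierstrassCurve.Affine.equation_iff]
    simp only [Et]
    rcases hx with h | h | h <;> rw [h] <;> ring
  · left
    simp only [Et]
    rcases hx with h | h | h <;> rw [h] <;> intro hc <;> apply ht2 <;> nlinarith

/-- A point `(x, y)` of `Eₜ` satisfying the Weierstrass equation with `y ≠ 0` is nonsingular. -/
lemma Et_nonsingular_of_ne (t x y : ℚ) (hy : y ≠ 0) (h : y ^ 2 = x ^ 3 - t ^ 2 * x) :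
    (Et t).Nonsingular x y := by
  rw [WeierstrassCurve.Affine.nonsingular_iff']
  constructor
  · rw [WeierstrassCurve.Affine.equation_iff]
    simp only [Et]
    linarith
  · right
    simp only [Et]
    intro hc
    exact hy (by linarith)

/-- The triangle associated to a point `(X, Y)` of `Eₜ` with `Y ≠ 0`. -/
def triangleOf (t X Y : ℚ) : ℚ × ℚ × ℚ :=
  ((X ^ 2 - t ^ 2) / Y, 2 * t * X / Y, (X ^ 2 + t ^ 2) / Y)

/-- Translating a point `P = (X, Y)` of `Eₜ` (with `Y ≠ 0`) by the torsion points transforms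
the associated triangle `T(P) = (a, b, c)` as follows: `T(−P) = (−a, −b, −c)`,
`T(P + (0, 0)) = (−a, −b, c)`, `T(P + (t, 0)) = (−b, −a, −c)` and
`T(P + (−t, 0)) = (b, a, −c)`. -/
theorem Et_torsion_action_on_triangles (t X Y : ℚ) (ht : t ≠ 0) (hY : Y ≠ 0)
    (heq : Y ^ 2 = X ^ 3 - t ^ 2 * X) :
    let P : (Et t).Point := .some _ _ (Et_nonsingular_of_ne t X Y hY heq)
    let T₁ : (Et t).Point := .some _ _ (Et_nonsingular t 0 ht (Or.inl rfl))
    let T₂ : (Et t).Point := .some _ _ (Et_nonsingular t t ht (Or.inr (Or.inl rfl)))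
    let T₃ : (Et t).Point := .some _ _ (Et_nonsingular t (-t) ht (Or.inr (Or.inr rfl)))
    let a : ℚ := (X ^ 2 - t ^ 2) / Y
    let b : ℚ := 2 * t * X / Y
    let c : ℚ := (X ^ 2 + t ^ 2) / Y
    (∃ (X' Y' : ℚ) (h' : (Et t).Nonsingular X' Y'),
      -P = .some _ _ h' ∧ Y' ≠ 0 ∧ triangleOf t X' Y' = (-a, -b, -c)) ∧
    (∃ (X' Y' : ℚ) (h' : (Et t).Nonsingular X' Y'),
      P + T₁ = .some _ _ h' ∧ Y' ≠ 0 ∧ triangleOf t X' Y' = (-a, -b, c)) ∧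
    (∃ (X' Y' : ℚ) (h' : (Et t).Nonsingular X' Y'),
      P + T₂ = .some _ _ h' ∧ Y' ≠ 0 ∧ triangleOf t X' Y' = (-b, -a, -c)) ∧
    (∃ (X' Y' : ℚ) (h' : (Et t).Nonsingular X' Y'),
      P + T₃ = .some _ _ h' ∧ Y' ≠ 0 ∧ triangleOf t X' Y' = (b, a, -c)) := by
  intro P T₁ T₂ T₃ a b c
  have hfac : Y ^ 2 = X * (X - t) * (X + t) := by rw [heq]; ring
  have key : ∀ u : ℚ, Y ^ 2 = u → u = 0 → False := by
    intro u h1 h2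
    apply hY
    exact pow_eq_zero_iff two_ne_zero |>.mp (h1.trans h2)
  have hX0 : X ≠ 0 := by intro h; exact key _ hfac (by rw [h]; ring)
  have hXt : X ≠ t := by intro h; exact key _ hfac (by rw [h]; ring)
  have hXmt : X ≠ -t := by intro h; exact key _ hfac (by rw [h]; ring)
  refine ⟨?_, ?_, ?_, ?_⟩
  · -- negation
    refine ⟨X, (Et t).negY X Y, _, WeierstrassCurve.Affine.Point.neg_some _, ?_, ?_⟩
    · simp [WeierstrassCurve.Affine.negY, Et, hY]
    · simp only [triangleOf, WeierstrassCurve.Affine.negY, Et, a, b, c]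
      norm_num
      refine ⟨by ring, by ring, by ring⟩
  · -- add (0,0)
    have hL : (Et t).slope X 0 Y 0 = Y / X := by
      rw [WeierstrassCurve.Affine.slope_of_X_ne hX0]; ring_nf
    refine ⟨_, _, _, WeierstrassCurve.Affine.Point.add_of_X_ne hX0, ?_, ?_⟩
    · have : (Et t).addY X 0 Y ((Et t).slope X 0 Y 0) = t ^ 2 * Y / X ^ 2 := by
        rw [hL]
        simp only [WeierstrassCurve.Affine.addY, WeierstrassCurve.Affine.negAddY,
          WeierstrassCurve.Affine.addX, WeierstrassCurve.Affine.negY, Et, hL]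
        field_simp
        linear_combination (-Y) * heq
      rw [this]
      positivity
    · have hx' : (Et t).addX X 0 ((Et t).slope X 0 Y 0) = -t ^ 2 / X := by
        rw [hL]
        simp only [WeierstrassCurve.Affine.addX, Et, hL]
        field_simp
        linear_combination heq
      have hy' : (Et t).addY X 0 Y ((Et t).slope X 0 Y 0) = t ^ 2 * Y / X ^ 2 := by
        rw [hL]
        simp only [WeierstrassCurve.Affine.addY, WeierstrassCurve.Affine.negAddY,
          WeierstrassCurve.Affine.addX, WeierstrassCurve.Affine.negY, Et, hL]
        field_simp
        linear_combination (-Y) * heq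
      rw [triangleOf, hx', hy']
      simp only [a, b, c, Prod.mk.injEq]
      refine ⟨?_, ?_, ?_⟩ <;> field_simp <;> ring
  · -- add (t,0)
    have hL : (Et t).slope X t Y 0 = Y / (X - t) := by
      rw [WeierstrassCurve.Affine.slope_of_X_ne hXt]; ring_nf
    have hd : X - t ≠ 0 := sub_ne_zero.mpr hXt
    refine ⟨_, _, _, WeierstrassCurve.Affine.Point.add_of_X_ne hXt, ?_, ?_⟩
    · have : (Et t).addY X t Y ((Et t).slope X t Y 0) = -(2 * t ^ 2 * Y) / (X - t) ^ 2 := by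
        rw [hL]
        simp only [WeierstrassCurve.Affine.addY, WeierstrassCurve.Affine.negAddY,
          WeierstrassCurve.Affine.addX, WeierstrassCurve.Affine.negY, Et, hL]
        field_simp
        linear_combination (-Y) * heq
      rw [this]
      intro h
      apply hY
      have := div_eq_zero_iff.mp h
      rcases this with h1 | h1
      · have : (2 : ℚ) * t ^ 2 ≠ 0 := by positivity
        field_simp at h1
        simpa [ht] using h1
      · exact absurd h1 (pow_ne_zero 2 hd)
    · have hx' : (Et t).addX X t ((Et t).slope X t Y 0) = t * (X + t) / (X - t) := by
        rw [hL]
        simp only [WeierstrassCurve.Affine.addX, Et, hL]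
        field_simp
        linear_combination heq
      have hy' : (Et t).addY X t Y ((Et t).slope X t Y 0) = -(2 * t ^ 2 * Y) / (X - t) ^ 2 := by
        rw [hL]
        simp only [WeierstrassCurve.Affine.addY, WeierstrassCurve.Affine.negAddY,
          WeierstrassCurve.Affine.addX, WeierstrassCurve.Affine.negY, Et, hL]
        field_simp
        linear_combination (-Y) * heq
      rw [triangleOf, hx', hy']
      simp only [a, b, c, Prod.mk.injEq]
      refine ⟨?_, ?_, ?_⟩ <;> field_simp <;> ring
  · -- add (-t,0)
    have hL : (Et t).slope X (-t) Y 0 = Y / (X + t) := by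
      rw [WeierstrassCurve.Affine.slope_of_X_ne hXmt]; ring_nf
    have hd : X + t ≠ 0 := by intro h; exact hXmt (by linarith)
    refine ⟨_, _, _, WeierstrassCurve.Affine.Point.add_of_X_ne hXmt, ?_, ?_⟩
    · have : (Et t).addY X (-t) Y ((Et t).slope X (-t) Y 0) = -(2 * t ^ 2 * Y) / (X + t) ^ 2 := by
        rw [hL]
        simp only [WeierstrassCurve.Affine.addY, WeierstrassCurve.Affine.negAddY,
          WeierstrassCurve.Affine.addX, WeierstrassCurve.Affine.negY, Et, hL]
        field_simp
        linear_combination (-Y) * heq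
      rw [this]
      intro h
      apply hY
      rcases div_eq_zero_iff.mp h with h1 | h1
      · have : (2 : ℚ) * t ^ 2 ≠ 0 := by positivity
        field_simp at h1
        simpa [ht] using h1
      · exact absurd h1 (pow_ne_zero 2 hd)
    · have hx' : (Et t).addX X (-t) ((Et t).slope X (-t) Y 0) = -(t * (X - t)) / (X + t) := by
        rw [hL]
        simp only [WeierstrassCurve.Affine.addX, Et, hL]
        field_simp
        linear_combination heq
      have hy' : (Et t).addY X (-t) Y ((Et t).slope X (-t) Y 0) = -(2 * t ^ 2 * Y) / (X + t) ^ 2 := by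
        rw [hL]
        simp only [WeierstrassCurve.Affine.addY, WeierstrassCurve.Affine.negAddY,
          WeierstrassCurve.Affine.addX, WeierstrassCurve.Affine.negY, Et, hL]
        field_simp
        linear_combination (-Y) * heq
      rw [triangleOf, hx', hy']
      simp only [a, b, c, Prod.mk.injEq]
      refine ⟨?_, ?_, ?_⟩ <;> field_simp <;> ring
end

section
/- Let t be a squarefree positive integer and let ℋ(t) be the set of positive integers c such that c is the hypotenuse of some primitive Pythagorean triple (a, b, c) for which the squarefree part of ab/2 equals t (that is, (ab/2)·t is a perfect square). Then the sum over c ∈ ℋ(t) of 1/c converges. -/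
/-- `hypotenuseSet t` is the set `ℋ(t)` of hypotenuses of primitive Pythagorean triples
`(a, b, c)` whose area `a·b/2` has squarefree part equal to `t`, i.e. `(a·b/2)·t` is a
perfect square. -/
def hypotenuseSet (t : ℕ) : Set ℕ :=
  {c | ∃ a b : ℕ, 0 < a ∧ 0 < b ∧ a ^ 2 + b ^ 2 = c ^ 2 ∧
    Nat.gcd (Nat.gcd a b) c = 1 ∧ ∃ k : ℕ, ((a : ℚ) * b / 2) * t = (k : ℚ) ^ 2}


lemma sq_of_even_factorization {n : ℕ} (hn : n ≠ 0)
    (h : ∀ p, Even (n.factorization p)) : ∃ r : ℕ, n = r ^ 2 := by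
  refine ⟨n.factorization.prod fun p e => p ^ (e / 2), ?_⟩
  conv_lhs => rw [← Nat.factorization_prod_pow_eq_self hn]
  rw [Finsupp.prod, Finsupp.prod, ← Finset.prod_pow]
  refine Finset.prod_congr rfl fun p hp => ?_
  rw [← pow_mul]
  congr 1
  obtain ⟨w, hw⟩ := h p
  omega

/-- If `u * v * t` is a square with `u, v` coprime and `t` squarefree, then
`u` is `gcd u t` times a square. -/
lemma lemP {t u v k : ℕ} (ht : Squarefree t) (hu : 0 < u) (hv : 0 < v)
    (hcop : Nat.Coprime u v) (h : u * v * t = k ^ 2) :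
    ∃ a, 0 < a ∧ u = Nat.gcd u t * a ^ 2 := by
  have ht0 : t ≠ 0 := ht.ne_zero
  set d := Nat.gcd u t with hd
  have hdu : d ∣ u := Nat.gcd_dvd_left _ _
  have hdpos : 0 < d := Nat.gcd_pos_of_pos_left _ hu
  have hud : u / d ≠ 0 := Nat.div_ne_zero_iff_of_dvd hdu |>.mpr ⟨hu.ne', hdpos.ne'⟩
  have heven : ∀ p, Even ((u / d).factorization p) := by
    intro p
    by_cases hp : p.Prime
    · by_cases hpu : p ∣ u
      · have hfe : (u * v * t).factorization p =
            u.factorization p + v.factorization p + t.factorization p := by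
          rw [Nat.factorization_mul (Nat.mul_ne_zero hu.ne' hv.ne') ht0,
            Nat.factorization_mul hu.ne' hv.ne']
          simp
        have hEv : Even (u.factorization p + v.factorization p + t.factorization p) := by
          rw [← hfe, h, Nat.factorization_pow]
          exact ⟨k.factorization p, by simp [two_mul]⟩
        have hv0 : v.factorization p = 0 := by
          apply Nat.factorization_eq_zero_of_not_dvd
          intro hpv
          have hd1 : p ∣ Nat.gcd u v := Nat.dvd_gcd hpu hpv
          rw [hcop] at hd1
          exact hp.one_lt.ne' (Nat.dvd_one.mp hd1)
        have hdiv : (u / d).factorization p = u.factorization p - d.factorization p := by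
          rw [Nat.factorization_div hdu]; rfl
        have hgcd : d.factorization p = min (u.factorization p) (t.factorization p) := by
          rw [hd, Nat.factorization_gcd hu.ne' ht0]; rfl
        have ht1 : t.factorization p ≤ 1 := ht.natFactorization_le_one p
        rw [hdiv, hgcd]
        rw [Nat.even_iff] at hEv ⊢
        omega
      · have h1 : ¬ p ∣ u / d := fun hc => hpu (hc.trans ⟨d, (Nat.div_mul_cancel hdu).symm⟩)
        simp [Nat.factorization_eq_zero_of_not_dvd h1]
    · simp [Nat.factorization_eq_zero_of_not_prime _ hp]
  obtain ⟨r, hr⟩ := sq_of_even_factorization hud heven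
  refine ⟨r, ?_, ?_⟩
  · rcases Nat.eq_zero_or_pos r with rfl | hrp
    · simp at hr; exact absurd (Nat.div_eq_zero_iff.mpr hr) hud
    · exact hrp
  · rw [← hr, Nat.mul_div_cancel' hdu]


lemma natAbs_area (m n : ℤ) (hle : n.natAbs ≤ m.natAbs) :
    (2 * (m * n * (m ^ 2 - n ^ 2))).natAbs =
      2 * (m.natAbs * n.natAbs * ((m.natAbs + n.natAbs) * (m.natAbs - n.natAbs))) := by
  have hm2 : ((m.natAbs : ℤ)) ^ 2 = m ^ 2 := Int.natAbs_sq m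
  have hn2 : ((n.natAbs : ℤ)) ^ 2 = n ^ 2 := Int.natAbs_sq n
  have h2 : m ^ 2 - n ^ 2 = (((m.natAbs + n.natAbs) * (m.natAbs - n.natAbs) : ℕ) : ℤ) := by
    rw [Nat.cast_mul, Nat.cast_add, Nat.cast_sub hle, ← hm2, ← hn2]; ring
  rw [h2, Int.natAbs_mul, Int.natAbs_mul, Int.natAbs_mul, Int.natAbs_natCast]
  rfl

lemma reduce_to_nat (m n : ℤ) (a b c : ℕ) (hab_int : (a:ℤ) * b = 2 * (m * n * (m ^ 2 - n ^ 2)))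
    (hzc : (c:ℤ) = m ^ 2 + n ^ 2) (hco : Int.gcd m n = 1) :
    ∃ M N : ℕ, N ≤ M ∧ Nat.Coprime M N ∧ c = M ^ 2 + N ^ 2 ∧
      a * b = 2 * (M * N * ((M + N) * (M - N))) := by
  rcases le_total n.natAbs m.natAbs with hle | hle
  · refine ⟨m.natAbs, n.natAbs, hle, hco, ?_, ?_⟩
    · have h : (c:ℤ) = ((m.natAbs ^ 2 + n.natAbs ^ 2 : ℕ) : ℤ) := by
        rw [hzc]; push_cast; rw [sq_abs, sq_abs]
      exact_mod_cast h
    · have h1 : (((a * b : ℕ)) : ℤ) = 2 * (m * n * (m ^ 2 - n ^ 2)) := by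
        push_cast; exact hab_int
      have h2 : a * b = (2 * (m * n * (m ^ 2 - n ^ 2))).natAbs := by
        rw [← h1, Int.natAbs_natCast]
      rw [h2, natAbs_area m n hle]
  · refine ⟨n.natAbs, m.natAbs, hle, (Nat.Coprime.symm hco), ?_, ?_⟩
    · have h : (c:ℤ) = ((n.natAbs ^ 2 + m.natAbs ^ 2 : ℕ) : ℤ) := by
        rw [hzc]; push_cast; rw [sq_abs, sq_abs]; ring
      exact_mod_cast h
    · have h1 : (((a * b : ℕ)) : ℤ) = 2 * (n * m * (n ^ 2 - m ^ 2)) ∨ True := Or.inr trivial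
      have h2 : a * b = (2 * (n * m * (n ^ 2 - m ^ 2))).natAbs := by
        have hneg : 2 * (n * m * (n ^ 2 - m ^ 2)) = -(2 * (m * n * (m ^ 2 - n ^ 2))) := by ring
        rw [hneg, Int.natAbs_neg]
        have h1 : (((a * b : ℕ)) : ℤ) = 2 * (m * n * (m ^ 2 - n ^ 2)) := by
          push_cast; exact hab_int
        rw [← h1, Int.natAbs_natCast]
      rw [h2, natAbs_area n m hle]

lemma extraction {t : ℕ} (hsf : Squarefree t) (ht : 0 < t) {c : ℕ}
    (hc : c ∈ hypotenuseSet t) :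
    ∃ t1 t2 α β : ℕ, 0 < t1 ∧ t1 ≤ t ∧ 0 < t2 ∧ t2 ≤ t ∧ 0 < α ∧ 0 < β ∧
      c = (t1 * α ^ 2) ^ 2 + (t2 * β ^ 2) ^ 2 := by
  obtain ⟨a, b, ha, hb, hpyth, hgcd, k, hk⟩ := hc
  -- a and b are coprime
  have hab_cop : Nat.Coprime a b := by
    have h1 : Nat.gcd a b ^ 2 ∣ c ^ 2 := by
      rw [← hpyth]
      exact dvd_add (pow_dvd_pow_of_dvd (Nat.gcd_dvd_left a b) 2)
        (pow_dvd_pow_of_dvd (Nat.gcd_dvd_right a b) 2)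
    have hd : Nat.gcd a b ∣ c := (Nat.pow_dvd_pow_iff (by norm_num)).mp h1
    have h2 : Nat.gcd a b ∣ Nat.gcd (Nat.gcd a b) c := Nat.dvd_gcd dvd_rfl hd
    rw [hgcd] at h2
    exact Nat.dvd_one.mp h2
  -- Pythagorean triple structure
  have hPT : PythagoreanTriple (a : ℤ) b c := by
    have h := congrArg (fun x : ℕ => (x : ℤ)) hpyth
    push_cast at h
    show (a:ℤ) * a + b * b = c * c
    nlinarith [h]
  have hIgcd : Int.gcd (a : ℤ) b = 1 := by
    simpa [Int.gcd] using hab_cop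
  obtain ⟨m, n, hmn, hz, hco, -⟩ := PythagoreanTriple.coprime_classification.mp ⟨hPT, hIgcd⟩
  have hc0 : 0 < c := by
    rcases Nat.eq_zero_or_pos c with rfl | h
    · have h1 : 0 < a ^ 2 := by positivity
      omega
    · exact h
  have hzc : (c : ℤ) = m ^ 2 + n ^ 2 := by
    rcases hz with hz | hz
    · exact hz
    · exfalso
      have h1 : (0:ℤ) < c := by exact_mod_cast hc0
      nlinarith [sq_nonneg m, sq_nonneg n]
  have hab_int : (a:ℤ) * b = 2 * (m * n * (m ^ 2 - n ^ 2)) := by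
    rcases hmn with ⟨h1, h2⟩ | ⟨h1, h2⟩ <;> rw [h1, h2] <;> ring
  obtain ⟨M, N, hle, hMN, hcMN, hABn⟩ := reduce_to_nat m n a b c hab_int hzc hco
  -- positivity of the parameters
  have habpos : 0 < a * b := Nat.mul_pos ha hb
  have hfacts : 0 < M ∧ 0 < N ∧ N < M := by
    rw [hABn] at habpos
    have h1 : M * N * ((M + N) * (M - N)) ≠ 0 := by omega
    rw [Nat.mul_ne_zero_iff, Nat.mul_ne_zero_iff, Nat.mul_ne_zero_iff] at h1
    omega
  obtain ⟨hMpos, hNpos, hlt⟩ := hfacts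
  -- the natural-number square equation
  have habt : a * b * t = 2 * k ^ 2 := by
    have hq : ((a : ℚ)) * b * t = 2 * k ^ 2 := by
      field_simp at hk
      linarith
    exact_mod_cast hq
  have hEt : M * N * ((M + N) * (M - N)) * t = k ^ 2 := by
    apply Nat.eq_of_mul_eq_mul_left (show 0 < 2 by norm_num)
    calc 2 * (M * N * ((M + N) * (M - N)) * t)
        = 2 * (M * N * ((M + N) * (M - N))) * t := by ring
      _ = a * b * t := by rw [hABn]
      _ = 2 * k ^ 2 := habt
  -- coprimality facts
  have g1 : Nat.Coprime M (M + N) := by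
    have hdvd : Nat.gcd M (M + N) ∣ N := by
      have h := Nat.dvd_sub (Nat.gcd_dvd_right M (M + N)) (Nat.gcd_dvd_left M (M + N))
      simpa using h
    have h4 : Nat.gcd M (M + N) ∣ Nat.gcd M N := Nat.dvd_gcd (Nat.gcd_dvd_left _ _) hdvd
    rw [hMN.gcd_eq_one] at h4
    exact Nat.dvd_one.mp h4
  have g2 : Nat.Coprime M (M - N) := by
    have hdvd : Nat.gcd M (M - N) ∣ N := by
      have h := Nat.dvd_sub (Nat.gcd_dvd_left M (M - N)) (Nat.gcd_dvd_right M (M - N))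
      rwa [Nat.sub_sub_self hle] at h
    have h4 : Nat.gcd M (M - N) ∣ Nat.gcd M N := Nat.dvd_gcd (Nat.gcd_dvd_left _ _) hdvd
    rw [hMN.gcd_eq_one] at h4
    exact Nat.dvd_one.mp h4
  have g3 : Nat.Coprime N (M + N) := by
    have hdvd : Nat.gcd N (M + N) ∣ M := by
      have h := Nat.dvd_sub (Nat.gcd_dvd_right N (M + N)) (Nat.gcd_dvd_left N (M + N))
      simpa using h
    have h4 : Nat.gcd N (M + N) ∣ Nat.gcd N M := Nat.dvd_gcd (Nat.gcd_dvd_left _ _) hdvd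
    rw [hMN.symm.gcd_eq_one] at h4
    exact Nat.dvd_one.mp h4
  have g4 : Nat.Coprime N (M - N) := by
    have hdvd : Nat.gcd N (M - N) ∣ M := by
      have h := dvd_add (Nat.gcd_dvd_right N (M - N)) (Nat.gcd_dvd_left N (M - N))
      rwa [Nat.sub_add_cancel hle] at h
    have h4 : Nat.gcd N (M - N) ∣ Nat.gcd N M := Nat.dvd_gcd (Nat.gcd_dvd_left _ _) hdvd
    rw [hMN.symm.gcd_eq_one] at h4
    exact Nat.dvd_one.mp h4
  have hv1 : 0 < N * ((M + N) * (M - N)) :=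
    Nat.mul_pos hNpos (Nat.mul_pos (by omega) (by omega))
  have hv2 : 0 < M * ((M + N) * (M - N)) :=
    Nat.mul_pos hMpos (Nat.mul_pos (by omega) (by omega))
  have hcop1 : Nat.Coprime M (N * ((M + N) * (M - N))) :=
    hMN.mul_right (g1.mul_right g2)
  have hcop2 : Nat.Coprime N (M * ((M + N) * (M - N))) :=
    hMN.symm.mul_right (g3.mul_right g4)
  obtain ⟨α, hα, hMeq⟩ := lemP hsf hMpos hv1 hcop1
    (show M * (N * ((M + N) * (M - N))) * t = k ^ 2 by rw [← hEt]; ring)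
  obtain ⟨β, hβ, hNeq⟩ := lemP hsf hNpos hv2 hcop2
    (show N * (M * ((M + N) * (M - N))) * t = k ^ 2 by rw [← hEt]; ring)
  refine ⟨Nat.gcd M t, Nat.gcd N t, α, β,
    Nat.gcd_pos_of_pos_left _ hMpos, Nat.le_of_dvd ht (Nat.gcd_dvd_right _ _),
    Nat.gcd_pos_of_pos_left _ hNpos, Nat.le_of_dvd ht (Nat.gcd_dvd_right _ _),
    hα, hβ, ?_⟩
  rw [hcMN]
  conv_lhs => rw [hMeq, hNeq]

set_option maxHeartbeats 1000000 in
/-- For a squarefree positive integer `t`, the sum of the reciprocals of the hypotenuses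
in `ℋ(t)` converges. -/
theorem summable_inv_hypotenuseSet (t : ℕ) (hsf : Squarefree t) (ht : 0 < t) :
    Summable fun c : hypotenuseSet t => (1 : ℝ) / (c : ℕ) := by
  classical
  have key : ∀ c : hypotenuseSet t, ∃ q : (Fin (t+1) × ℕ) × Fin (t+1) × ℕ,
      (c : ℕ) = ((q.1.1 : ℕ) * q.1.2 ^ 2) ^ 2 + ((q.2.1 : ℕ) * q.2.2 ^ 2) ^ 2 ∧
      0 < q.1.2 ∧ 0 < q.2.2 ∧ 0 < (q.1.1 : ℕ) ∧ 0 < (q.2.1 : ℕ) := by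
    rintro ⟨c, hc⟩
    obtain ⟨t1, t2, α, β, ht1, ht1', ht2, ht2', hα, hβ, hceq⟩ := extraction hsf ht hc
    exact ⟨((⟨t1, by omega⟩, α), (⟨t2, by omega⟩, β)), hceq, hα, hβ, ht1, ht2⟩
  choose F hF hF1 hF2 hF3 hF4 using key
  have Finj : Function.Injective F := by
    intro c1 c2 h
    apply Subtype.ext
    rw [hF c1, hF c2, h]
  have h1 : Summable (fun x : Fin (t+1) × ℕ => 1 / ((x.2 : ℝ)) ^ 2) := by
    have hs : Summable (fun n : ℕ => 1 / ((n : ℝ)) ^ 2) :=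
      Real.summable_one_div_nat_pow.mpr one_lt_two
    have hcst : Summable (fun _ : Fin (t+1) => (1 : ℝ)) := summable_of_finite_support
      (Set.toFinite _)
    simpa using hcst.mul_of_nonneg hs (fun _ => zero_le_one) (fun n => by positivity)
  have hg : Summable (fun q : (Fin (t+1) × ℕ) × Fin (t+1) × ℕ =>
      (1 / ((q.1.2 : ℝ)) ^ 2) * (1 / ((q.2.2 : ℝ)) ^ 2)) :=
    h1.mul_of_nonneg h1 (fun q => by positivity) (fun q => by positivity)
  refine Summable.of_nonneg_of_le (fun c => by positivity) ?_ (hg.comp_injective Finj)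
  intro c
  simp only [Function.comp_apply]
  have hc := hF c
  have hA1 : (1:ℝ) ≤ ((F c).1.2 : ℝ) := by
    exact_mod_cast Nat.one_le_iff_ne_zero.mpr (hF1 c).ne'
  have hB1 : (1:ℝ) ≤ ((F c).2.2 : ℝ) := by
    exact_mod_cast Nat.one_le_iff_ne_zero.mpr (hF2 c).ne'
  have hT1 : (1:ℝ) ≤ (((F c).1.1 : ℕ) : ℝ) := by
    exact_mod_cast Nat.one_le_iff_ne_zero.mpr (hF3 c).ne'
  have hT2 : (1:ℝ) ≤ (((F c).2.1 : ℕ) : ℝ) := by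
    exact_mod_cast Nat.one_le_iff_ne_zero.mpr (hF4 c).ne'
  have hcR : ((c : ℕ) : ℝ) = ((((F c).1.1 : ℕ) : ℝ) * (((F c).1.2 : ℕ) : ℝ) ^ 2) ^ 2
      + ((((F c).2.1 : ℕ) : ℝ) * (((F c).2.2 : ℕ) : ℝ) ^ 2) ^ 2 := by
    exact_mod_cast hc
  set T1 := (((F c).1.1 : ℕ) : ℝ)
  set T2 := (((F c).2.1 : ℕ) : ℝ)
  set A := (((F c).1.2 : ℕ) : ℝ)
  set B := (((F c).2.2 : ℕ) : ℝ)
  have hA0 : (0:ℝ) < A := lt_of_lt_of_le one_pos hA1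
  have hB0 : (0:ℝ) < B := lt_of_lt_of_le one_pos hB1
  have hge : A ^ 2 * B ^ 2 ≤ ((c : ℕ) : ℝ) := by
    rw [hcR]
    have k1 : (1:ℝ) ≤ T1 * T1 := by nlinarith
    have k2 : (1:ℝ) ≤ T2 * T2 := by nlinarith
    nlinarith [sq_nonneg (A ^ 2 - B ^ 2), sq_nonneg A, sq_nonneg B,
      mul_le_mul_of_nonneg_right k1 (by positivity : (0:ℝ) ≤ A ^ 2 * A ^ 2),
      mul_le_mul_of_nonneg_right k2 (by positivity : (0:ℝ) ≤ B ^ 2 * B ^ 2)]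
  have hpos : (0:ℝ) < A ^ 2 * B ^ 2 := mul_pos (pow_pos hA0 2) (pow_pos hB0 2)
  calc (1:ℝ) / (c : ℕ) ≤ 1 / (A ^ 2 * B ^ 2) := one_div_le_one_div_of_le hpos hge
    _ = 1 / A ^ 2 * (1 / B ^ 2) := by rw [div_mul_div_comm, one_mul]
end
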